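/- arXiv:2302.13299 — 3 statements merged into one kernel-verified Lean document; each statement's English description precedes it below -/
import Mathlib

section
/- Let x ∈ ℂ^D be a unit vector with real and imaginary parts x^re, x^im ∈ ℝ^D. Define x₊^re, x₋^re, x₊^im, x₋^im ∈ ℝ^D by splitting x^re and x^im into their (entrywise) nonnegative and negative parts, so x^re = x₊^re + x₋^re and x^im = x₊^im + x₋^im. Let Φ = e_{00} ⊗ x₊^re − e_{01} ⊗ x₋^re + e_{10} ⊗ x₊^im − e_{11} ⊗ x₋^im ∈ ℂ² ⊗ ℂ² ⊗ ℂ^D. Then: (i) ‖Φ‖ = 1; (ii) the component of (H ⊗ I_2 ⊗ I_D)(S ⊗ H ⊗ I_D)Φ on the two-qubit ancilla basis state e_{01} equals x/2; hence the probability of ancilla outcome 01 is 1/4 and the normalized post-measurement vector is x. -/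
open Matrix Kronecker

/-- The 2×2 Hadamard matrix. -/
noncomputable def Hmat : Matrix (Fin 2) (Fin 2) ℂ :=
  ((Real.sqrt 2 : ℂ))⁻¹ • !![1, 1; 1, -1]

/-- The 2×2 phase gate `S = diag(1, i)`. -/
def Smat : Matrix (Fin 2) (Fin 2) ℂ := !![1, 0; 0, Complex.I]

theorem vqsp_complex_case (D : ℕ) (x : Fin D → ℂ) (hx : ∑ j, ‖x j‖ ^ 2 = 1) :
    let xpre : Fin D → ℝ := fun j => if 0 ≤ (x j).re then (x j).re else 0
    let xmre : Fin D → ℝ := fun j => if (x j).re < 0 then (x j).re else 0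
    let xpim : Fin D → ℝ := fun j => if 0 ≤ (x j).im then (x j).im else 0
    let xmim : Fin D → ℝ := fun j => if (x j).im < 0 then (x j).im else 0
    let Φ : (Fin 2 × Fin 2) × Fin D → ℂ := fun p =>
      if p.1 = (0, 0) then (xpre p.2 : ℂ)
      else if p.1 = (0, 1) then -(xmre p.2 : ℂ)
      else if p.1 = (1, 0) then (xpim p.2 : ℂ)
      else -(xmim p.2 : ℂ)
    let W : (Fin 2 × Fin 2) × Fin D → ℂ :=
      ((Hmat ⊗ₖ (1 : Matrix (Fin 2) (Fin 2) ℂ)) ⊗ₖ (1 : Matrix (Fin D) (Fin D) ℂ)).mulVec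
        (((Smat ⊗ₖ Hmat) ⊗ₖ (1 : Matrix (Fin D) (Fin D) ℂ)).mulVec Φ)
    -- (i) Φ is a unit vector
    (∑ p, ‖Φ p‖ ^ 2 = 1) ∧
    -- (ii) the component on the ancilla basis state e₀₁ is x/2
    (∀ jd, W ((0, 1), jd) = x jd / 2) ∧
    -- the probability of outcome 01 is 1/4
    (∑ jd, ‖W ((0, 1), jd)‖ ^ 2 = 1 / 4) ∧
    -- the normalized post-measurement vector is x
    (∀ jd, 2 * W ((0, 1), jd) = x jd) := by
  intro xpre xmre xpim xmim Φ W
  have h2 : (Real.sqrt 2 : ℂ) * (Real.sqrt 2 : ℂ) = 2 := by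
    norm_cast
    rw [Real.mul_self_sqrt (by norm_num : (0:ℝ) ≤ 2)]
  have hs2 : ((Real.sqrt 2 : ℂ))⁻¹ * ((Real.sqrt 2 : ℂ))⁻¹ = 1 / 2 := by
    rw [← mul_inv, h2]; norm_num
  have hW : ∀ jd, W ((0, 1), jd) = x jd / 2 := by
    intro jd
    have key : W ((0,1), jd)
        = (Real.sqrt 2 : ℂ)⁻¹ * ((Real.sqrt 2 : ℂ)⁻¹ * (Φ ((0,0),jd) - Φ ((0,1),jd))
          + Complex.I * ((Real.sqrt 2 : ℂ)⁻¹ * (Φ ((1,0),jd) - Φ ((1,1),jd)))) := by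
      simp only [W]
      simp [Matrix.mulVec, dotProduct, Fintype.sum_prod_type, Matrix.one_apply,
        Hmat, Smat, Fin.sum_univ_two, mul_ite, ite_mul, mul_zero, zero_mul,
        Finset.sum_ite_eq, Finset.sum_ite_eq']
      ring
    have hre : (xpre jd : ℂ) - (-(xmre jd : ℂ)) = ((x jd).re : ℂ) := by
      simp only [xpre, xmre, sub_neg_eq_add, ← Complex.ofReal_add]
      norm_cast
      rcases le_or_gt 0 (x jd).re with h | h
      · simp [h, not_lt.mpr h]
      · simp [h, not_le.mpr h]
    have him : (xpim jd : ℂ) - (-(xmim jd : ℂ)) = ((x jd).im : ℂ) := by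
      simp only [xpim, xmim, sub_neg_eq_add, ← Complex.ofReal_add]
      norm_cast
      rcases le_or_gt 0 (x jd).im with h | h
      · simp [h, not_lt.mpr h]
      · simp [h, not_le.mpr h]
    have hΦ00 : Φ ((0,0),jd) = (xpre jd : ℂ) := by simp [Φ]
    have hΦ01 : Φ ((0,1),jd) = -(xmre jd : ℂ) := by simp [Φ]
    have hΦ10 : Φ ((1,0),jd) = (xpim jd : ℂ) := by simp [Φ]
    have hΦ11 : Φ ((1,1),jd) = -(xmim jd : ℂ) := by simp [Φ, Prod.ext_iff]
    rw [key, hΦ00, hΦ01, hΦ10, hΦ11, hre, him]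
    rw [show (Real.sqrt 2 : ℂ)⁻¹ * (((Real.sqrt 2:ℂ))⁻¹ * ((x jd).re:ℂ)
        + Complex.I * (((Real.sqrt 2:ℂ))⁻¹ * ((x jd).im:ℂ)))
      = ((Real.sqrt 2:ℂ))⁻¹ * ((Real.sqrt 2:ℂ))⁻¹ * (((x jd).re:ℂ) + ((x jd).im:ℂ) * Complex.I) by ring,
      hs2, Complex.re_add_im]
    ring
  have hsq : ∀ j, xpre j ^ 2 + xmre j ^ 2 = (x j).re ^ 2 := by
    intro j
    rcases le_or_gt 0 (x j).re with h | h
    · simp [xpre, xmre, h, not_lt.mpr h]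
    · simp [xpre, xmre, h, not_le.mpr h]
  have hsqi : ∀ j, xpim j ^ 2 + xmim j ^ 2 = (x j).im ^ 2 := by
    intro j
    rcases le_or_gt 0 (x j).im with h | h
    · simp [xpim, xmim, h, not_lt.mpr h]
    · simp [xpim, xmim, h, not_le.mpr h]
  have hnx : ∀ j, ‖x j‖ ^ 2 = (x j).re ^ 2 + (x j).im ^ 2 := by
    intro j
    rw [Complex.sq_norm, Complex.normSq_apply]
    ring
  refine ⟨?_, hW, ?_, fun jd => by rw [hW jd]; ring⟩
  · simp only [Fintype.sum_prod_type, Fin.sum_univ_two]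
    have : ∀ (a b : Fin 2) (j : Fin D), ‖Φ ((a,b), j)‖^2 =
      (if (a,b) = ((0:Fin 2),(0:Fin 2)) then xpre j ^2 else
       if (a,b) = ((0:Fin 2),(1:Fin 2)) then xmre j ^2 else
       if (a,b) = ((1:Fin 2),(0:Fin 2)) then xpim j ^2 else xmim j ^2) := by
      intro a b j
      fin_cases a <;> fin_cases b <;>
        simp [Φ, Prod.ext_iff, Complex.norm_real, sq_abs]
    simp only [this]
    simp only [reduceIte, Prod.mk.injEq]
    rw [← hx]
    rw [← Finset.sum_add_distrib, ← Finset.sum_add_distrib, ← Finset.sum_add_distrib]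
    refine Finset.sum_congr rfl fun j _ => ?_
    have := hsq j; have := hsqi j
    rw [hnx j]
    simp at *
    linarith
  · have : ∀ jd, ‖W ((0,1), jd)‖^2 = (1/4) * ‖x jd‖^2 := by
      intro jd
      rw [hW jd]
      rw [norm_div]
      simp
      ring
    simp only [this, ← Finset.mul_sum, hx, mul_one]
end

section
/- Let m ≥ 1, M = 2^m, and let Q_0, …, Q_{M-1} be N×N complex matrices, a_0, …, a_{M-1} nonnegative reals not all zero, A' = ∑_j a_j², Q = ∑_j a_j Q_j, and a' = ∑_j (a_j/√A')·e_j ∈ ℂ^M. Let Λ = ∑_j |j⟩⟨j| ⊗ Q_j and let H^{⊗m} be the m-fold Kronecker power of the Hadamard matrix, with entries (H^{⊗m})_{j',j} = (−1)^{j·j'}/√(2^m), where j·j' is the bitwise inner product modulo 2 of the binary expansions of j and j'. Then for every ψ ∈ ℂ^N: (i) (H^{⊗m} ⊗ I_N)·Λ·(a' ⊗ ψ) = (1/√(2^m A')) ∑_{j,j'=0}^{M-1} a_j(−1)^{j·j'} e_{j'} ⊗ Q_jψ; (ii) the component of this vector on the ancilla basis state e_0 equals Qψ/√(2^m A'); hence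 if ‖ψ‖ = 1, the probability of measuring the ancilla register in state e_0 is ‖Qψ‖²/(2^m A'). -/
open Matrix Kronecker

/-- Bitwise inner product of the binary expansions of `j` and `j'`. -/
def bitDot {M : ℕ} (m : ℕ) (j j' : Fin M) : ℕ :=
  ∑ g : Fin m, (Nat.testBit j.val g.val).toNat * (Nat.testBit j'.val g.val).toNat

theorem lamv (m N : ℕ) (Q : Fin (2 ^ m) → Matrix (Fin N) (Fin N) ℂ)
    (a' : Fin (2^m) → ℂ) (ψ : Fin N → ℂ) (p : Fin (2^m) × Fin N) :
    (∑ j, Matrix.single j j (1 : ℂ) ⊗ₖ Q j).mulVec (fun p => a' p.1 * ψ p.2) p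
      = a' p.1 * (Q p.1).mulVec ψ p.2 := by
  simp only [mulVec, dotProduct, Fintype.sum_prod_type, Matrix.sum_apply, kroneckerMap_apply,
    Matrix.single, Matrix.of_apply, ite_mul, one_mul, zero_mul, Finset.mul_sum]
  rw [Finset.sum_comm]
  have h : ∀ (y : Fin (2^m)) (x : Fin N),
      (∑ x1 : Fin (2^m), if x1 = p.1 ∧ x1 = y then Q x1 p.2 x else 0) * (a' y * ψ x)
      = (if y = p.1 then a' p.1 * (Q p.1 p.2 x * ψ x) else 0) := by
    intro y x
    by_cases hy : y = p.1
    · subst hy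
      rw [Finset.sum_eq_single p.1]
      · simp; ring
      · intro b _ hb; rw [if_neg]; rintro ⟨h1, h2⟩; exact hb h1
      · simp
    · rw [Finset.sum_eq_zero, zero_mul, if_neg hy]
      intro x1 _; rw [if_neg]; rintro ⟨h1, h2⟩; exact hy (h2 ▸ h1)
  simp_rw [h]
  simp [Finset.sum_comm (γ := Fin N), Finset.sum_ite_eq]

theorem lcu_hadamard_ancilla (m N : ℕ) (hm : 1 ≤ m)
    (Q : Fin (2 ^ m) → Matrix (Fin N) (Fin N) ℂ)
    (a : Fin (2 ^ m) → ℝ) (ha : ∀ j, 0 ≤ a j) (hne : ∃ j, a j ≠ 0) :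
    let A' : ℝ := ∑ j, a j ^ 2
    let a' : Fin (2 ^ m) → ℂ := fun j => (a j : ℂ) / (Real.sqrt A' : ℂ)
    let Λ : Matrix (Fin (2 ^ m) × Fin N) (Fin (2 ^ m) × Fin N) ℂ :=
      ∑ j, Matrix.single j j (1 : ℂ) ⊗ₖ Q j
    let Hpow : Matrix (Fin (2 ^ m)) (Fin (2 ^ m)) ℂ :=
      fun j' j => (-1 : ℂ) ^ bitDot m j j' / (Real.sqrt (2 ^ m) : ℂ)
    let Qmat : Matrix (Fin N) (Fin N) ℂ := ∑ j, (a j : ℂ) • Q j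
    ∀ ψ : Fin N → ℂ,
      let v : Fin (2 ^ m) × Fin N → ℂ :=
        (Hpow ⊗ₖ (1 : Matrix (Fin N) (Fin N) ℂ)).mulVec
          (Λ.mulVec (fun p => a' p.1 * ψ p.2))
      -- (i)
      (v = fun p => (1 / (Real.sqrt (2 ^ m * A') : ℂ)) *
          ∑ j, (a j : ℂ) * (-1 : ℂ) ^ bitDot m j p.1 * (Q j).mulVec ψ p.2) ∧
      -- (ii) component on the ancilla basis state e₀
      (∀ i, v (⟨0, Nat.two_pow_pos m⟩, i)
          = Qmat.mulVec ψ i / (Real.sqrt (2 ^ m * A') : ℂ)) ∧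
      -- probability of measuring the ancilla in state e₀
      ((∑ i, ‖ψ i‖ ^ 2 = 1) →
        ∑ i, ‖v (⟨0, Nat.two_pow_pos m⟩, i)‖ ^ 2
          = (∑ i, ‖Qmat.mulVec ψ i‖ ^ 2) / (2 ^ m * A')) := by
  intro A' a' Λ Hpow Qmat ψ v
  have hA : (0:ℝ) < A' := by
    obtain ⟨j, hj⟩ := hne
    exact Finset.sum_pos' (fun i _ => sq_nonneg _)
      ⟨j, Finset.mem_univ j, by positivity⟩
  have h2 : (0:ℝ) < (2:ℝ)^m := by positivity
  have hsqrt : Real.sqrt ((2:ℝ) ^ m * A') = Real.sqrt ((2:ℝ)^m) * Real.sqrt A' :=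
    Real.sqrt_mul (le_of_lt h2) _
  have hs2 : (0:ℝ) < Real.sqrt ((2:ℝ)^m) := Real.sqrt_pos.2 h2
  have hsA : (0:ℝ) < Real.sqrt A' := Real.sqrt_pos.2 hA
  have hsMA : (0:ℝ) < Real.sqrt ((2:ℝ)^m * A') := Real.sqrt_pos.2 (by positivity)
  have hi : v = fun p => (1 / (Real.sqrt (2 ^ m * A') : ℂ)) *
      ∑ j, (a j : ℂ) * (-1 : ℂ) ^ bitDot m j p.1 * (Q j).mulVec ψ p.2 := by
    funext p
    show ((Hpow ⊗ₖ 1).mulVec (Λ.mulVec fun p => a' p.1 * ψ p.2)) p = _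
    have hΛ : (Λ.mulVec fun p => a' p.1 * ψ p.2)
        = fun p => a' p.1 * (Q p.1).mulVec ψ p.2 := funext (lamv m N Q a' ψ)
    rw [hΛ]
    simp only [mulVec, dotProduct, Fintype.sum_prod_type, kroneckerMap_apply,
      Matrix.one_apply, mul_ite, mul_one, mul_zero, ite_mul, zero_mul]
    simp only [Finset.sum_ite_eq, Finset.mem_univ, if_true, Finset.mul_sum]
    apply Finset.sum_congr rfl
    intro j _
    apply Finset.sum_congr rfl
    intro i _
    simp only [Hpow, a']
    rw [show ((Real.sqrt (2 ^ m * A') : ℝ) : ℂ)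
        = (Real.sqrt ((2:ℝ)^m) : ℂ) * (Real.sqrt A' : ℂ) by
      push_cast [hsqrt]; norm_num]
    have c1 : (Real.sqrt ((2:ℝ)^m) : ℂ) ≠ 0 := by exact_mod_cast hs2.ne'
    have c2 : ((Real.sqrt A' : ℝ) : ℂ) ≠ 0 := by exact_mod_cast hsA.ne'
    field_simp
  have hbd : ∀ j : Fin (2^m), bitDot m j (⟨0, Nat.two_pow_pos m⟩ : Fin (2^m)) = 0 := by
    intro j
    simp [bitDot, Nat.zero_testBit]
  have hii : ∀ i, v (⟨0, Nat.two_pow_pos m⟩, i)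
      = Qmat.mulVec ψ i / (Real.sqrt (2 ^ m * A') : ℂ) := by
    intro i
    rw [hi]
    simp only [hbd, pow_zero, mul_one]
    have hQ : Qmat.mulVec ψ i = ∑ j, (a j : ℂ) * (Q j).mulVec ψ i := by
      simp [Qmat, mulVec, dotProduct, Matrix.sum_apply, Finset.sum_mul, Finset.mul_sum]
      rw [Finset.sum_comm]
      apply Finset.sum_congr rfl; intros; apply Finset.sum_congr rfl; intros; ring
    rw [hQ]
    ring
  refine ⟨hi, hii, fun _ => ?_⟩
  have hnrm : ∀ i, ‖v (⟨0, Nat.two_pow_pos m⟩, i)‖ ^ 2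
      = ‖Qmat.mulVec ψ i‖ ^ 2 / (2 ^ m * A') := by
    intro i
    rw [hii i, norm_div, div_pow]
    congr 1
    rw [Complex.norm_real, Real.norm_eq_abs, abs_of_pos hsMA,
      Real.sq_sqrt (by positivity)]
  simp_rw [hnrm]
  rw [Finset.sum_div]
end

section
/- Let D ≥ 1 and let x ∈ ℝ^D satisfy x_j > 0 for all j and ∑_j x_j² = 1. Let φ ∈ ℂ^D be any unit vector (∑_j |φ_j|² = 1) with φ_j ≠ 0 for all j. Define the cost F(φ) = |∑_j φ_j − ∑_j x_j| + ∑_j x_j² · log(x_j² / |φ_j|²), where |·| in the first term is the complex modulus. Then F(φ) ≥ 0, and F(φ) = 0 if and only if φ_j = x_j for all j. -/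
lemma gibbs_le {a b : ℝ} (ha : 0 < a) (hb : 0 < b) :
    a - b ≤ a * Real.log (a / b) := by
  have h := Real.log_le_sub_one_of_pos (div_pos hb ha)
  have hlog : Real.log (a / b) = - Real.log (b / a) := by
    rw [← Real.log_inv]; congr 1; field_simp
  rw [hlog]
  have h2 := mul_le_mul_of_nonneg_left h ha.le
  have : a * (b / a - 1) = b - a := by field_simp
  nlinarith
lemma gibbs_lt {a b : ℝ} (ha : 0 < a) (hb : 0 < b) (hne : a ≠ b) :
    a - b < a * Real.log (a / b) := by
  have hne' : b / a ≠ 1 := by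
    intro h
    exact hne ((div_eq_one_iff_eq ha.ne').mp h).symm
  have h := Real.log_lt_sub_one_of_pos (div_pos hb ha) hne'
  have hlog : Real.log (a / b) = - Real.log (b / a) := by
    rw [← Real.log_inv]; congr 1; field_simp
  rw [hlog]
  have h2 := mul_lt_mul_of_pos_left h ha
  have : a * (b / a - 1) = b - a := by field_simp
  nlinarith

theorem cost_function_nonneg_and_faithful (D : ℕ) (hD : 1 ≤ D)
    (x : Fin D → ℝ) (hxpos : ∀ j, 0 < x j) (hx : ∑ j, x j ^ 2 = 1)
    (φ : Fin D → ℂ) (hφ : ∑ j, ‖φ j‖ ^ 2 = 1) (hφne : ∀ j, φ j ≠ 0) :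
    let F : ℝ := ‖(∑ j, φ j) - ∑ j, (x j : ℂ)‖ +
      ∑ j, x j ^ 2 * Real.log (x j ^ 2 / ‖φ j‖ ^ 2)
    0 ≤ F ∧ (F = 0 ↔ ∀ j, φ j = (x j : ℂ)) := by
  intro F
  have hypos : ∀ j, (0:ℝ) < ‖φ j‖ ^ 2 := fun j => by
    have := norm_pos_iff.mpr (hφne j); positivity
  have hxsq : ∀ j, (0:ℝ) < x j ^ 2 := fun j => by have := hxpos j; positivity
  -- KL nonnegativity
  have hKL : 0 ≤ ∑ j, x j ^ 2 * Real.log (x j ^ 2 / ‖φ j‖ ^ 2) := by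
    have h1 : ∑ j, (x j ^ 2 - ‖φ j‖ ^ 2) ≤
        ∑ j, x j ^ 2 * Real.log (x j ^ 2 / ‖φ j‖ ^ 2) :=
      Finset.sum_le_sum fun j _ => gibbs_le (hxsq j) (hypos j)
    have h2 : ∑ j, (x j ^ 2 - ‖φ j‖ ^ 2) = 0 := by
      rw [Finset.sum_sub_distrib, hx, hφ]; ring
    linarith
  have habs : (0:ℝ) ≤ ‖(∑ j, φ j) - ∑ j, (x j : ℂ)‖ :=
    norm_nonneg _
  refine ⟨by positivity, ?_, ?_⟩
  · -- F = 0 → φ = x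
    intro hF
    have hKL0 : ∑ j, x j ^ 2 * Real.log (x j ^ 2 / ‖φ j‖ ^ 2) = 0 := by
      unfold F at hF; linarith
    have habs0 : ‖(∑ j, φ j) - ∑ j, (x j : ℂ)‖ = 0 := by
      unfold F at hF; linarith
    -- from KL = 0, ‖φ j‖ = x j for all j
    have hnorm : ∀ j, ‖φ j‖ = x j := by
      by_contra hcon
      push_neg at hcon
      obtain ⟨j0, hj0⟩ := hcon
      have hne : x j0 ^ 2 ≠ ‖φ j0‖ ^ 2 := by
        intro h
        apply hj0
        rw [← Real.sqrt_sq (norm_nonneg (φ j0)), ← h, Real.sqrt_sq (hxpos j0).le]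
      have hlt : ∑ j, (x j ^ 2 - ‖φ j‖ ^ 2) <
          ∑ j, x j ^ 2 * Real.log (x j ^ 2 / ‖φ j‖ ^ 2) := by
        apply Finset.sum_lt_sum (fun j _ => gibbs_le (hxsq j) (hypos j))
        exact ⟨j0, Finset.mem_univ j0, gibbs_lt (hxsq j0) (hypos j0) hne⟩
      have h2 : ∑ j, (x j ^ 2 - ‖φ j‖ ^ 2) = 0 := by
        rw [Finset.sum_sub_distrib, hx, hφ]; ring
      rw [h2, hKL0] at hlt
      exact lt_irrefl 0 hlt
    -- from abs = 0, ∑ φ = ∑ x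
    have hsum : (∑ j, φ j) = ∑ j, (x j : ℂ) := by
      have := norm_eq_zero.mp habs0
      linear_combination this
    -- real parts
    have hre : ∑ j, (φ j).re = ∑ j, x j := by
      have := congrArg Complex.re hsum
      simpa [Complex.re_sum] using this
    have hle : ∀ j ∈ Finset.univ, (φ j).re ≤ x j := fun j _ => by
      calc (φ j).re ≤ ‖φ j‖ := Complex.re_le_norm _
        _ = x j := hnorm j
    have heq : ∀ j ∈ Finset.univ, (φ j).re = x j := by
      intro j hj
      exact ((Finset.sum_eq_sum_iff_of_le hle).mp hre j hj)
    intro j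
    have h1 : (φ j).re = x j := heq j (Finset.mem_univ j)
    have h2 : (φ j).re ^ 2 + (φ j).im ^ 2 = x j ^ 2 := by
      have := hnorm j
      have hn : ‖φ j‖ ^ 2 = (φ j).re ^ 2 + (φ j).im ^ 2 := by
        rw [Complex.sq_norm, Complex.normSq_apply]; ring
      rw [← hn, this]
    have him2 : (φ j).im ^ 2 = 0 := by linear_combination h2 + (-(φ j).re - x j) * h1
    have him : (φ j).im = 0 := pow_eq_zero_iff two_ne_zero |>.mp him2
    apply Complex.ext <;> simp [h1, him]
  · -- φ = x → F = 0
    intro h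
    have h1 : (∑ j, φ j) - ∑ j, (x j : ℂ) = 0 := by
      simp [h]
    have h2 : ∀ j, ‖φ j‖ ^ 2 = x j ^ 2 := fun j => by
      rw [h j, Complex.norm_real, Real.norm_eq_abs, sq_abs]
    unfold F
    rw [h1]
    simp only [map_zero, norm_zero, zero_add]
    apply Finset.sum_eq_zero
    intro j _
    rw [h2 j, div_self (hxsq j).ne', Real.log_one, mul_zero]
end
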